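/- Let n be a natural number and K : ℝⁿ → ℝⁿ a C³ map. Then K satisfies the Killing equation for the Euclidean metric (∂K^i/∂x^j (x) + ∂K^j/∂x^i (x) = 0 for all x, i, j) if and only if there exist a vector c ∈ ℝⁿ and an antisymmetric n×n real matrix B (Bᵀ = −B) such that K(x) = c + B·x for all x ∈ ℝⁿ. In other words, all infinitesimal isometries of the Euclidean metric are translations and infinitesimal rotations. -/

import Mathlib

/-- The partial derivative of a function `f : ℝⁿ → ℝ` in the `j`-th coordinate
direction at the point `x`. -/
noncomputable def pderiv' {n : ℕ} (j : Fin n) (f : (Fin n → ℝ) → ℝ) (x : Fin n → ℝ) : ℝ :=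
  fderiv ℝ f x (Pi.single j 1)

lemma clm_eq_of_single {n : ℕ} (L M : (Fin n → ℝ) →L[ℝ] ℝ)
    (h : ∀ j, L (Pi.single j 1) = M (Pi.single j 1)) : L = M := by
  ext v
  have hv : v = ∑ j, v j • (Pi.single j 1 : Fin n → ℝ) := by
    ext k
    simp [Pi.single_apply, Finset.sum_apply]
  rw [hv, map_sum, map_sum]
  simp [h]

noncomputable def rowCLM {n : ℕ} (r : Fin n → ℝ) : (Fin n → ℝ) →L[ℝ] ℝ :=
  ∑ k, r k • (ContinuousLinearMap.proj k : (Fin n → ℝ) →L[ℝ] ℝ)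

lemma rowCLM_apply {n : ℕ} (r v : Fin n → ℝ) : rowCLM r v = ∑ k, r k * v k := by
  simp [rowCLM, ContinuousLinearMap.sum_apply]

lemma rowCLM_single {n : ℕ} (r : Fin n → ℝ) (j : Fin n) :
    rowCLM r (Pi.single j 1) = r j := by
  rw [rowCLM_apply]; simp [Pi.single_apply]

lemma pderiv_of_second {n : ℕ} (f : (Fin n → ℝ) → ℝ) (hf : ContDiff ℝ 3 f)
    (x w v : Fin n → ℝ) :
    fderiv ℝ (fun y => fderiv ℝ f y w) x v = fderiv ℝ (fderiv ℝ f) x v w := by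
  have hd2 : DifferentiableAt ℝ (fderiv ℝ f) x :=
    (hf.fderiv_right (m := 2) (by norm_num)).differentiable (by norm_num) x
  have hcomp : HasFDerivAt (fun y => fderiv ℝ f y w)
      ((ContinuousLinearMap.apply ℝ ℝ w).comp (fderiv ℝ (fderiv ℝ f) x)) x :=
    (ContinuousLinearMap.apply ℝ ℝ w).hasFDerivAt.comp x hd2.hasFDerivAt
  rw [hcomp.fderiv]; rfl

/-- A `C³` map `K : ℝⁿ → ℝⁿ` satisfies the Killing equation for the Euclidean metric
if and only if `K x = c + B x` for some vector `c` and some antisymmetric matrix `B`: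
all infinitesimal isometries of the Euclidean metric are translations and
infinitesimal rotations. -/
theorem killing_iff_affine_antisymm (n : ℕ) (K : (Fin n → ℝ) → (Fin n → ℝ))
    (hK : ContDiff ℝ 3 K) :
    (∀ (x : Fin n → ℝ) (i j : Fin n),
        pderiv' j (fun y => K y i) x + pderiv' i (fun y => K y j) x = 0) ↔
      ∃ (c : Fin n → ℝ) (B : Matrix (Fin n) (Fin n) ℝ),
        B.transpose = -B ∧ ∀ x : Fin n → ℝ, K x = c + B.mulVec x := by
  have hfC : ∀ i : Fin n, ContDiff ℝ 3 (fun y => K y i) := fun i =>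
    (ContinuousLinearMap.proj i : ((Fin n → ℝ)) →L[ℝ] ℝ).contDiff.comp hK
  constructor
  · intro h
    -- the array of second partial derivatives
    set a : Fin n → Fin n → Fin n → (Fin n → ℝ) → ℝ := fun i p q x =>
      fderiv ℝ (fun y => fderiv ℝ (fun z => K z i) y (Pi.single q 1)) x (Pi.single p 1)
      with ha
    -- symmetry in the two derivative directions
    have hsym : ∀ (i p q : Fin n) (x : Fin n → ℝ), a i p q x = a i q p x := by
      intro i p q x
      have hs := ((hfC i).contDiffAt (x := x)).isSymmSndFDerivAt (by norm_num)
      rw [ha]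
      simp only
      rw [pderiv_of_second _ (hfC i), pderiv_of_second _ (hfC i)]
      exact hs _ _
    -- the Killing relation, differentiated
    have hkill : ∀ (i p q : Fin n) (x : Fin n → ℝ), a i p q x = -a q p i x := by
      intro i p q x
      have heq : (fun y => fderiv ℝ (fun z => K z i) y (Pi.single q 1)) =
          (fun y => -(fderiv ℝ (fun z => K z q) y (Pi.single i 1))) := by
        funext y
        have := h y i q
        simp only [pderiv'] at this
        linarith
      rw [ha]
      simp only
      rw [heq, fderiv_fun_neg]
      rfl
    have hzero : ∀ (i p q : Fin n) (x : Fin n → ℝ), a i p q x = 0 := by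
      intro i p q x
      have : a i p q x = -a i p q x := by
        calc a i p q x = a i q p x := hsym ..
          _ = -a p q i x := hkill ..
          _ = -a p i q x := by rw [hsym]
          _ = a q i p x := by have := hkill p i q x; linarith
          _ = a q p i x := hsym ..
          _ = -a i p q x := hkill ..
      linarith
    -- hence each partial derivative is constant
    have hdf : ∀ i : Fin n, Differentiable ℝ (fun y => K y i) := fun i =>
      (hfC i).differentiable (by norm_num)
    have hd2 : ∀ i : Fin n, Differentiable ℝ (fderiv ℝ (fun y => K y i)) := fun i =>
      ((hfC i).fderiv_right (m := 2) (by norm_num)).differentiable (by norm_num)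
    have hconst : ∀ (i q : Fin n) (x : Fin n → ℝ),
        fderiv ℝ (fun y => K y i) x (Pi.single q 1) =
        fderiv ℝ (fun y => K y i) 0 (Pi.single q 1) := by
      intro i q x
      have hdiffg : Differentiable ℝ (fun y => fderiv ℝ (fun z => K z i) y (Pi.single q 1)) := by
        intro y
        exact ((ContinuousLinearMap.apply ℝ ℝ (Pi.single q 1)).hasFDerivAt.comp y
          (hd2 i y).hasFDerivAt).differentiableAt
      refine is_const_of_fderiv_eq_zero hdiffg ?_ x 0
      intro y
      apply clm_eq_of_single
      intro p
      have := hzero i p q y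
      rw [ha] at this
      simpa using this
    -- the derivative of each component is the constant linear map
    have hderiv : ∀ (i : Fin n) (x : Fin n → ℝ),
        fderiv ℝ (fun y => K y i) x = fderiv ℝ (fun y => K y i) 0 := by
      intro i x
      exact clm_eq_of_single _ _ (fun j => hconst i j x)
    refine ⟨K 0, Matrix.of (fun i j => fderiv ℝ (fun y => K y i) 0 (Pi.single j 1)), ?_, ?_⟩
    · ext i j
      have := h 0 j i
      simp only [pderiv'] at this
      simp only [Matrix.transpose_apply, Matrix.neg_apply, Matrix.of_apply]
      linarith
    · intro x
      funext i
      -- K x i - L x is constant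
      set L := fderiv ℝ (fun y => K y i) 0 with hL
      have hdiff : Differentiable ℝ (fun y => K y i - L y) :=
        (hdf i).sub L.differentiable
      have hfz : ∀ y, fderiv ℝ (fun y => K y i - L y) y = 0 := by
        intro y
        rw [fderiv_fun_sub ((hdf i) y) (L.differentiableAt)]
        rw [hderiv i y, L.fderiv, ← hL, sub_self]
      have hc := is_const_of_fderiv_eq_zero hdiff hfz x 0
      have hmv : (Matrix.of (fun i j => fderiv ℝ (fun y => K y i) 0
          (Pi.single j 1))).mulVec x i = L x := by
        have hx : x = ∑ j, x j • (Pi.single j 1 : Fin n → ℝ) := by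
          ext k; simp [Pi.single_apply, Finset.sum_apply]
        rw [hL]
        conv_rhs => rw [hx]
        rw [map_sum]
        simp only [map_smul, smul_eq_mul]
        simp [Matrix.mulVec, dotProduct, mul_comm]
      simp only [map_zero, sub_zero] at hc
      rw [Pi.add_apply, hmv]
      linarith
  · rintro ⟨c, B, hB, hKeq⟩ x i j
    have hcomp : ∀ (a b : Fin n), pderiv' b (fun y => K y a) x = B a b := by
      intro a b
      have heq : (fun y => K y a) = fun y => c a + rowCLM (B a) y := by
        funext y
        rw [hKeq y]
        simp [rowCLM_apply, Matrix.mulVec, dotProduct]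
      have hfd : HasFDerivAt (fun y => c a + rowCLM (B a) y) (rowCLM (B a)) x := by
        simpa using (rowCLM (B a)).hasFDerivAt
      rw [pderiv', heq, hfd.fderiv, rowCLM_single]
    rw [hcomp i j, hcomp j i]
    have := congrFun (congrFun hB j) i
    simp only [Matrix.transpose_apply, Matrix.neg_apply] at this
    linarith
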